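/- Let Λ = {Λ_i ∈ B(X₂, Y_i)} be a qg-Riesz basis for X₂^* with bounds A_Λ, B_Λ. Then there exists a sequence {~Λ_i ∈ B(X₂^*, Y_i^*)} which is a qg-frame for X₂^* with bounds 1/B_Λ and 1/A_Λ, satisfying x^* = Σ_i Λ_i^* (~Λ_i x^*) for every x^* ∈ X₂^*, and ~Λ_k ∘ Λ_i^* = δ_{k,i} Id on Y_i^*. Moreover {~Λ_i} is a pg-Riesz basis for X₂. -/

import Mathlib

open NormedSpace Filter

/-- The Banach-space adjoint (dual map) of a continuous linear map. -/
noncomputable def opAdj {X Y : Type*} [NormedAddCommGroup X] [NormedSpace ℝ X]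
    [NormedAddCommGroup Y] [NormedSpace ℝ Y] (T : X →L[ℝ] Y) :
    StrongDual ℝ Y →L[ℝ] StrongDual ℝ X :=
  (ContinuousLinearMap.compL ℝ X Y ℝ).flip T

lemma opAdj_apply {X Y : Type*} [NormedAddCommGroup X] [NormedSpace ℝ X]
    [NormedAddCommGroup Y] [NormedSpace ℝ Y] (T : X →L[ℝ] Y)
    (g : StrongDual ℝ Y) (x : X) : opAdj T g x = g (T x) := rfl

open scoped ENNReal in
private lemma _dummy_ennreal : (1:ℝ≥0∞) = 1 := rfl

open scoped ENNReal

private lemma le_of_forall_pos_le_add' {a b : ℝ} (h : ∀ ε : ℝ, 0 < ε → a ≤ b + ε) : a ≤ b := by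
  by_contra hc
  push_neg at hc
  have := h ((a - b) / 2) (by linarith)
  linarith

section Aux

variable {X₂ : Type*} [NormedAddCommGroup X₂] [NormedSpace ℝ X₂] [CompleteSpace X₂]
    {Y : ℕ → Type*} [∀ i, NormedAddCommGroup (Y i)] [∀ i, NormedSpace ℝ (Y i)]
    [∀ i, CompleteSpace (Y i)]

/-- coordinate evaluation on lp as a continuous linear map -/
noncomputable def lpCoord (q' : ℝ≥0∞) [Fact (1 ≤ q')] (i : ℕ) :
    lp (fun j => StrongDual ℝ (Y j)) q' →L[ℝ] StrongDual ℝ (Y i) :=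
  LinearMap.mkContinuous
    { toFun := fun g => g i
      map_add' := fun g h => by simp [lp.coeFn_add]
      map_smul' := fun c g => by simp [lp.coeFn_smul] }
    1 (fun g => by
      rw [one_mul]
      exact lp.norm_apply_le_norm (by
        have : (1 : ℝ≥0∞) ≤ q' := Fact.out
        intro h0; rw [h0] at this; simp at this) g i)

lemma lpCoord_apply (q' : ℝ≥0∞) [Fact (1 ≤ q')] (i : ℕ)
    (g : lp (fun j => StrongDual ℝ (Y j)) q') : lpCoord (Y := Y) q' i g = g i := rfl

end Aux

set_option maxHeartbeats 1600000 in
/-- a qg-Riesz basis `Λ` for `X₂*` with bounds `A_Λ, B_Λ` has a dual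
sequence `~Λᵢ ∈ B(X₂*, Yᵢ*)` which is a qg-frame for `X₂*` with bounds `1/B_Λ, 1/A_Λ`,
satisfies the reconstruction `x* = Σᵢ Λᵢ* (~Λᵢ x*)` and the biorthogonality
`~Λₖ ∘ Λᵢ* = δ_{k,i} Id`, and is moreover a pg-Riesz basis for `X₂` (stated via the
canonical double-dual realisation). -/
theorem qgRieszBasis_dual_sequence
    {X₂ : Type*} [NormedAddCommGroup X₂] [NormedSpace ℝ X₂] [CompleteSpace X₂]
    {Y : ℕ → Type*} [∀ i, NormedAddCommGroup (Y i)] [∀ i, NormedSpace ℝ (Y i)]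
    [∀ i, CompleteSpace (Y i)]
    (hreflX₂ : Function.Surjective (inclusionInDoubleDual ℝ X₂))
    (hreflY : ∀ i, Function.Surjective (inclusionInDoubleDual ℝ (Y i)))
    (p q : ℝ) (hp : 1 < p) (hpq : 1 / p + 1 / q = 1)
    (Λ : ∀ i, X₂ →L[ℝ] Y i) (AΛ BΛ : ℝ) (hAΛ : 0 < AΛ) (hBΛ : 0 < BΛ)
    (hcomplete : ∀ x : X₂, (∀ i, Λ i x = 0) → x = 0)
    (hriesz : ∀ (s : Finset ℕ) (g : ∀ i, StrongDual ℝ (Y i)),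
      AΛ * (∑ i ∈ s, ‖g i‖ ^ q) ^ (1 / q) ≤ ‖∑ i ∈ s, opAdj (Λ i) (g i)‖ ∧
      ‖∑ i ∈ s, opAdj (Λ i) (g i)‖ ≤ BΛ * (∑ i ∈ s, ‖g i‖ ^ q) ^ (1 / q)) :
    ∃ Λd : ∀ i, StrongDual ℝ X₂ →L[ℝ] StrongDual ℝ (Y i),
      -- `~Λ` is a qg-frame for `X₂*` with bounds `1/B_Λ` and `1/A_Λ`
      (∀ f : StrongDual ℝ X₂, Summable (fun i => ‖Λd i f‖ ^ q) ∧
        (1 / BΛ) * ‖f‖ ≤ (∑' i, ‖Λd i f‖ ^ q) ^ (1 / q) ∧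
        (∑' i, ‖Λd i f‖ ^ q) ^ (1 / q) ≤ (1 / AΛ) * ‖f‖) ∧
      -- reconstruction
      (∀ f : StrongDual ℝ X₂, Summable (fun i => opAdj (Λ i) (Λd i f)) ∧
        (∑' i, opAdj (Λ i) (Λd i f)) = f) ∧
      -- biorthogonality `~Λₖ ∘ Λᵢ* = δ_{k,i} Id`
      (∀ (k i : ℕ) (y : StrongDual ℝ (Y i)),
        Λd k (opAdj (Λ i) y) = if h : i = k then h ▸ y else 0) ∧
      -- `~Λ` is a pg-Riesz basis for `X₂`
      ((∀ f : StrongDual ℝ X₂, (∀ i, Λd i f = 0) → f = 0) ∧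
        ∃ A' B' : ℝ, 0 < A' ∧ 0 < B' ∧
          ∀ (s : Finset ℕ) (h : ∀ i, StrongDual ℝ (StrongDual ℝ (Y i))),
            A' * (∑ i ∈ s, ‖h i‖ ^ p) ^ (1 / p) ≤ ‖∑ i ∈ s, opAdj (Λd i) (h i)‖ ∧
            ‖∑ i ∈ s, opAdj (Λd i) (h i)‖ ≤ B' * (∑ i ∈ s, ‖h i‖ ^ p) ^ (1 / p)) := by
  have hpq' : Real.HolderConjugate p q := Real.holderConjugate_iff.mpr ⟨hp, by rw [← one_div, ← one_div]; exact hpq⟩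
  have hq1 : 1 < q := hpq'.symm.lt
  have hq0 : 0 < q := hpq'.symm.pos
  set q' : ℝ≥0∞ := ENNReal.ofReal q with hq'def
  haveI : Fact (1 ≤ q') := ⟨by
    rw [hq'def, ← ENNReal.ofReal_one]
    exact ENNReal.ofReal_le_ofReal hq1.le⟩
  have hq't : q'.toReal = q := ENNReal.toReal_ofReal hq0.le
  have hq't0 : 0 < q'.toReal := by rw [hq't]; exact hq0
  -- summability of ‖g i‖ ^ q for g in lp
  have hgsum : ∀ g : lp (fun j => StrongDual ℝ (Y j)) q', Summable (fun i => ‖g i‖ ^ q) := by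
    intro g
    have := lp.memℓp g
    rw [memℓp_gen_iff hq't0] at this
    rwa [hq't] at this
  -- norm of lp elements
  have hlpnorm : ∀ g : lp (fun j => StrongDual ℝ (Y j)) q', ‖g‖ = (∑' i, ‖g i‖ ^ q) ^ (1 / q) := by
    intro g
    rw [lp.norm_eq_tsum_rpow hq't0 g, hq't]
  -- summability of the series defining T
  have hsummable : ∀ g : lp (fun j => StrongDual ℝ (Y j)) q',
      Summable (fun i => opAdj (Λ i) (g i)) := by
    intro g
    have hg := hgsum g
    rw [summable_iff_cauchySeq_finset, cauchySeq_finset_iff_vanishing_norm] at hg ⊢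
    intro ε hε
    have hδ : (0:ℝ) < (ε / BΛ) ^ q := Real.rpow_pos_of_pos (div_pos hε hBΛ) q
    obtain ⟨s₀, hs₀⟩ := hg _ hδ
    refine ⟨s₀, fun t ht => ?_⟩
    have hnn : (0:ℝ) ≤ ∑ i ∈ t, ‖g i‖ ^ q :=
      Finset.sum_nonneg fun i _ => Real.rpow_nonneg (norm_nonneg _) q
    have h2 : ∑ i ∈ t, ‖g i‖ ^ q < (ε / BΛ) ^ q := by
      have := hs₀ t ht
      rwa [Real.norm_of_nonneg hnn] at this
    have h3 : ((ε / BΛ) ^ q) ^ (1/q) = ε / BΛ := by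
      rw [one_div, Real.rpow_rpow_inv (div_pos hε hBΛ).le hq0.ne']
    calc ‖∑ i ∈ t, opAdj (Λ i) (g i)‖
        ≤ BΛ * (∑ i ∈ t, ‖g i‖ ^ q) ^ (1/q) := (hriesz t (fun i => g i)).2
      _ < BΛ * (ε / BΛ) := by
          have h4 := Real.rpow_lt_rpow hnn h2 (one_div_pos.mpr hq0)
          rw [h3] at h4
          exact mul_lt_mul_of_pos_left h4 hBΛ
      _ = ε := by field_simp
  -- the synthesis operator T (as linear map)
  set Tlin : lp (fun j => StrongDual ℝ (Y j)) q' →ₗ[ℝ] StrongDual ℝ X₂ :=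
    { toFun := fun g => ∑' i, opAdj (Λ i) (g i)
      map_add' := fun g h => by
        have h1 : (fun i => opAdj (Λ i) ((g + h) i))
            = fun i => opAdj (Λ i) (g i) + opAdj (Λ i) (h i) := by
          funext i
          rw [lp.coeFn_add, Pi.add_apply, map_add]
        simp only [h1]
        exact Summable.tsum_add (hsummable g) (hsummable h)
      map_smul' := fun c g => by
        have h1 : (fun i => opAdj (Λ i) ((c • g) i))
            = fun i => c • opAdj (Λ i) (g i) := by
          funext i
          rw [lp.coeFn_smul, Pi.smul_apply, map_smul]
        simp only [h1, RingHom.id_apply]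
        exact Summable.tsum_const_smul c (hsummable g) } with hTlin
  -- boundedness of T
  have hTbound : ∀ g, ‖Tlin g‖ ≤ BΛ * ‖g‖ := by
    intro g
    have hhs : HasSum (fun i => opAdj (Λ i) (g i)) (Tlin g) := (hsummable g).hasSum
    have hnormT : Tendsto (fun t : Finset ℕ => ‖∑ i ∈ t, opAdj (Λ i) (g i)‖) atTop
        (nhds ‖Tlin g‖) := Filter.Tendsto.norm hhs
    refine le_of_tendsto hnormT (Filter.Eventually.of_forall fun t => ?_)
    calc ‖∑ i ∈ t, opAdj (Λ i) (g i)‖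
        ≤ BΛ * (∑ i ∈ t, ‖g i‖ ^ q) ^ (1/q) := (hriesz t (fun i => g i)).2
      _ ≤ BΛ * ‖g‖ := by
          rw [hlpnorm g]
          refine mul_le_mul_of_nonneg_left (Real.rpow_le_rpow
            (Finset.sum_nonneg fun i _ => Real.rpow_nonneg (norm_nonneg _) q)
            (Summable.sum_le_tsum t (fun i _ => Real.rpow_nonneg (norm_nonneg _) q) (hgsum g))
            (one_div_nonneg.mpr hq0.le)) hBΛ.le
  set T : lp (fun j => StrongDual ℝ (Y j)) q' →L[ℝ] StrongDual ℝ X₂ :=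
    Tlin.mkContinuous BΛ hTbound with hT
  have hTapp : ∀ g, T g = ∑' i, opAdj (Λ i) (g i) := fun g => rfl
  -- lower bound for T
  have hTlow : ∀ g, AΛ * ‖g‖ ≤ ‖T g‖ := by
    intro g
    have hhs : HasSum (fun i => opAdj (Λ i) (g i)) (T g) := (hsummable g).hasSum
    have hs2 : Tendsto (fun t : Finset ℕ => ‖∑ i ∈ t, opAdj (Λ i) (g i)‖) atTop
        (nhds ‖T g‖) := Filter.Tendsto.norm hhs
    have hs0 : HasSum (fun i => ‖g i‖ ^ q) (∑' i, ‖g i‖ ^ q) := (hgsum g).hasSum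
    have hs1 : Tendsto (fun t : Finset ℕ => AΛ * (∑ i ∈ t, ‖g i‖ ^ q) ^ (1/q)) atTop
        (nhds (AΛ * (∑' i, ‖g i‖ ^ q) ^ (1/q))) := by
      exact Filter.Tendsto.const_mul AΛ
        (Filter.Tendsto.rpow_const hs0 (Or.inr (one_div_nonneg.mpr hq0.le)))
    have := le_of_tendsto_of_tendsto' hs1 hs2 (fun t => (hriesz t (fun i => g i)).1)
    rwa [hlpnorm g]
  -- T is injective
  have hTinj : Function.Injective Tlin := by
    intro g g' hgg'
    have h0 : Tlin (g - g') = 0 := by rw [map_sub, hgg', sub_self]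
    have := hTlow (g - g')
    rw [hTapp] at this
    have h2 : AΛ * ‖g - g'‖ ≤ 0 := by
      rw [show (∑' i, opAdj (Λ i) ((g - g') i)) = Tlin (g - g') from rfl, h0, norm_zero] at this
      exact this
    have h3 : ‖g - g'‖ ≤ 0 := nonpos_of_mul_nonpos_right (by nlinarith [norm_nonneg (g - g')]) hAΛ
    rw [← sub_eq_zero]
    exact norm_le_zero_iff.mp h3
  -- T maps the single sequence to the adjoint
  have hTsingle : ∀ (i : ℕ) (y : StrongDual ℝ (Y i)), Tlin (lp.single (E := fun j => StrongDual ℝ (Y j)) q' i y) = opAdj (Λ i) y := by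
    intro i y
    have : (∑' j, opAdj (Λ j) ((lp.single (E := fun j => StrongDual ℝ (Y j)) q' i y) j)) = opAdj (Λ i) y := by
      rw [tsum_eq_single i]
      · exact congrArg _ (lp.single_apply_self (E := fun j => StrongDual ℝ (Y j)) q' i y)
      · intro j hj
        rw [lp.single_apply_ne (E := fun j => StrongDual ℝ (Y j)) q' i y hj, map_zero]
    exact this
  -- T is surjective
  have hTcoe : ⇑T = ⇑Tlin := rfl
  have hTsurj : Function.Surjective Tlin := by
    intro f
    by_contra hf
    push_neg at hf
    have hfnot : f ∉ Set.range ⇑Tlin := by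
      rintro ⟨g, hg⟩
      exact hf g hg
    have hclosed : IsClosed (Set.range ⇑Tlin) := by
      have halip : AntilipschitzWith ⟨AΛ⁻¹, by positivity⟩ ⇑T := by
        refine ContinuousLinearMap.antilipschitz_of_bound T fun g => ?_
        have h1 := hTlow g
        have : ‖g‖ ≤ AΛ⁻¹ * ‖T g‖ := by
          rw [inv_mul_eq_div, le_div_iff₀ hAΛ, mul_comm]
          exact h1
        exact this.trans (le_of_eq (by rfl))
      rw [← hTcoe]
      exact halip.isClosed_range T.uniformContinuous
    have hconv : Convex ℝ (Set.range ⇑Tlin) := by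
      rw [← LinearMap.coe_range]
      exact (LinearMap.range Tlin).convex
    obtain ⟨φ, u, hphif, hphiR⟩ := geometric_hahn_banach_point_closed hconv hclosed hfnot
    have hu0 : u < 0 := by
      have h0 := hphiR 0 ⟨0, map_zero _⟩
      rwa [map_zero] at h0
    have hphi0 : ∀ b ∈ Set.range ⇑Tlin, φ b = 0 := by
      rintro b ⟨g, rfl⟩
      by_contra hb0
      have hmem : ((u - 1) / (φ (Tlin g))) • Tlin g ∈ Set.range ⇑Tlin :=
        ⟨((u - 1) / (φ (Tlin g))) • g, map_smul _ _ _⟩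
      have h5 := hphiR _ hmem
      rw [map_smul, smul_eq_mul, div_mul_cancel₀ _ hb0] at h5
      linarith
    obtain ⟨x, hx⟩ := hreflX₂ φ
    have hxzero : ∀ i, Λ i x = 0 := by
      intro i
      refine eq_zero_of_forall_dual_eq_zero ℝ fun y => ?_
      have h1 : opAdj (Λ i) y ∈ Set.range ⇑Tlin :=
        ⟨lp.single (E := fun j => StrongDual ℝ (Y j)) q' i y, hTsingle i y⟩
      have h2 := hphi0 _ h1
      rw [← hx, dual_def] at h2
      exact h2
    have hx0 : x = 0 := hcomplete x hxzero
    rw [hx0, map_zero] at hx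
    rw [← hx] at hphif
    simp only [ContinuousLinearMap.zero_apply] at hphif
    linarith
  -- the inverse
  set e : lp (fun j => StrongDual ℝ (Y j)) q' ≃ₗ[ℝ] StrongDual ℝ X₂ :=
    LinearEquiv.ofBijective Tlin ⟨hTinj, hTsurj⟩ with he
  have heapp : ∀ g, e g = Tlin g := fun g => rfl
  have hSbound : ∀ f, ‖e.symm f‖ ≤ AΛ⁻¹ * ‖f‖ := by
    intro f
    have h1 := hTlow (e.symm f)
    rw [hTapp] at h1
    have h2 : (∑' i, opAdj (Λ i) ((e.symm f) i)) = Tlin (e.symm f) := rfl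
    rw [h2] at h1
    have h3 : Tlin (e.symm f) = f := e.apply_symm_apply f
    rw [h3] at h1
    rw [inv_mul_eq_div, le_div_iff₀ hAΛ, mul_comm]
    exact h1
  set S : StrongDual ℝ X₂ →L[ℝ] lp (fun j => StrongDual ℝ (Y j)) q' :=
    LinearMap.mkContinuous (e.symm : StrongDual ℝ X₂ →ₗ[ℝ] lp (fun j => StrongDual ℝ (Y j)) q')
      AΛ⁻¹ hSbound with hS
  have hSapp : ∀ f, S f = e.symm f := fun f => rfl
  have hTS : ∀ f, Tlin (S f) = f := fun f => e.apply_symm_apply f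
  have hST : ∀ g, S (Tlin g) = g := fun g => e.symm_apply_apply g
  -- the dual sequence
  set Λd : ∀ i, StrongDual ℝ X₂ →L[ℝ] StrongDual ℝ (Y i) := fun i => (lpCoord q' i).comp S with hΛd
  have hΛdapp : ∀ (i : ℕ) (f : StrongDual ℝ X₂), Λd i f = (S f : ∀ j, StrongDual ℝ (Y j)) i :=
    fun i f => rfl
  have hbio : ∀ (k i : ℕ) (y : StrongDual ℝ (Y i)),
      Λd k (opAdj (Λ i) y) = if h : i = k then h ▸ y else 0 := by
    intro k i y
    rw [hΛdapp]
    have h1 : S (opAdj (Λ i) y) = lp.single (E := fun j => StrongDual ℝ (Y j)) q' i y := by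
      rw [show opAdj (Λ i) y = Tlin (lp.single (E := fun j => StrongDual ℝ (Y j)) q' i y) from
        (hTsingle i y).symm]
      exact hST _
    rw [h1]
    by_cases hik : i = k
    · subst hik
      rw [dif_pos rfl]
      exact lp.single_apply_self (E := fun j => StrongDual ℝ (Y j)) q' i y
    · rw [dif_neg hik]
      exact lp.single_apply_ne (E := fun j => StrongDual ℝ (Y j)) q' i y (fun hh => hik hh.symm)
  refine ⟨Λd, ?_, ?_, hbio, ?_, ?_⟩
  · -- qg-frame bounds
    intro f
    have hg := hgsum (S f)
    have heqn : (fun i => ‖Λd i f‖ ^ q) = fun i => ‖(S f : ∀ j, StrongDual ℝ (Y j)) i‖ ^ q := by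
      funext i
      rw [hΛdapp]
    have hup : ‖f‖ ≤ BΛ * ‖S f‖ := by
      have h1 := hTbound (S f)
      rwa [hTS f] at h1
    refine ⟨by rw [heqn]; exact hg, ?_, ?_⟩
    · simp only [heqn]
      rw [← hlpnorm (S f), one_div_mul_eq_div, div_le_iff₀ hBΛ, mul_comm]
      exact hup
    · simp only [heqn]
      rw [← hlpnorm (S f), one_div]
      exact hSbound f
  · -- reconstruction
    intro f
    have heqn : (fun i => opAdj (Λ i) (Λd i f))
        = fun i => opAdj (Λ i) ((S f : ∀ j, StrongDual ℝ (Y j)) i) := by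
      funext i
      rw [hΛdapp]
    constructor
    · rw [heqn]
      exact hsummable (S f)
    · have h2 : (∑' i, opAdj (Λ i) (Λd i f)) = Tlin (S f) := by
        simp only [heqn]
        rfl
      rw [h2]
      exact hTS f
  · -- g-completeness of the dual family
    intro f hf
    have h0 : S f = 0 := by
      refine lp.ext (funext fun i => ?_)
      have h1 := hf i
      rw [hΛdapp] at h1
      simp only [lp.coeFn_zero, Pi.zero_apply]
      exact h1
    have h2 := hTS f
    rw [h0, map_zero] at h2
    exact h2.symm
  · -- pg-Riesz bounds
    have hp0 : (0:ℝ) < p := hpq'.pos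
    have hsplit : ∀ x : ℝ, 0 ≤ x → x ^ p = x ^ (p - 1) * x := by
      intro x hx
      rcases eq_or_lt_of_le hx with h0 | h0
      · rw [← h0, Real.zero_rpow hpq'.ne_zero, Real.zero_rpow hpq'.sub_one_ne_zero, mul_zero]
      · rw [← Real.rpow_add_one h0.ne' (p - 1), sub_add_cancel]
    refine ⟨1 / BΛ, 1 / AΛ, by positivity, by positivity, ?_⟩
    intro s h
    set Φ : StrongDual ℝ (StrongDual ℝ X₂) := ∑ i ∈ s, opAdj (Λd i) (h i) with hΦ
    set N : ℝ := ∑ i ∈ s, ‖h i‖ ^ p with hNdef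
    have hNnn : (0:ℝ) ≤ N := Finset.sum_nonneg fun i _ => Real.rpow_nonneg (norm_nonneg (h i)) p
    constructor
    · -- lower bound
      rcases eq_or_lt_of_le hNnn with hN | hNpos
      · rw [← hN, Real.zero_rpow (by positivity : (1:ℝ)/p ≠ 0), mul_zero]
        exact norm_nonneg _
      · apply le_of_forall_pos_le_add'
        intro ε hε
        set C : ℝ := ∑ i ∈ s, ‖h i‖ ^ (p - 1) with hCdef
        have hC0 : (0:ℝ) ≤ C := Finset.sum_nonneg fun i _ => Real.rpow_nonneg (norm_nonneg (h i)) _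
        have hNq : (0:ℝ) < N ^ (1/q) := Real.rpow_pos_of_pos hNpos _
        set δ : ℝ := ε * BΛ * N ^ (1/q) / (C + 1) with hδdef
        have hC1 : (0:ℝ) < C + 1 := by linarith
        have hδ : (0:ℝ) < δ := by
          rw [hδdef]
          exact div_pos (mul_pos (mul_pos hε hBΛ) hNq) hC1
        have hu : ∀ i, ∃ u : StrongDual ℝ (Y i), ‖u‖ ≤ 1 ∧ ‖h i‖ - δ ≤ (h i) u := by
          intro i
          rcases le_or_gt ‖h i‖ δ with hcase | hcase
          · exact ⟨0, by simp, by simp; linarith⟩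
          · obtain ⟨u, hu1, hu2⟩ := (h i).exists_lt_apply_of_lt_opNorm
              (show ‖h i‖ - δ < ‖h i‖ by linarith)
            rcases le_or_gt 0 ((h i) u) with hsgn | hsgn
            · refine ⟨u, hu1.le, ?_⟩
              rw [Real.norm_eq_abs, abs_of_nonneg hsgn] at hu2
              linarith
            · refine ⟨-u, by rw [norm_neg]; exact hu1.le, ?_⟩
              rw [map_neg]
              rw [Real.norm_eq_abs, abs_of_neg hsgn] at hu2
              linarith
        choose u hu1 hu2 using hu
        set g : ∀ i, StrongDual ℝ (Y i) := fun i => (‖h i‖ ^ (p - 1)) • u i with hgdef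
        set f₀ : StrongDual ℝ X₂ := ∑ i ∈ s, opAdj (Λ i) (g i) with hf₀
        have hgnorm : ∀ i, ‖g i‖ ≤ ‖h i‖ ^ (p - 1) := by
          intro i
          rw [hgdef]
          simp only []
          rw [norm_smul, Real.norm_eq_abs, abs_of_nonneg (Real.rpow_nonneg (norm_nonneg (h i)) _)]
          exact mul_le_of_le_one_right (Real.rpow_nonneg (norm_nonneg (h i)) _) (hu1 i)
        have hgq : ∀ i, ‖g i‖ ^ q ≤ ‖h i‖ ^ p := by
          intro i
          calc ‖g i‖ ^ q ≤ (‖h i‖ ^ (p - 1)) ^ q :=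
                Real.rpow_le_rpow (norm_nonneg _) (hgnorm i) hq0.le
            _ = ‖h i‖ ^ p := by
                rw [← Real.rpow_mul (norm_nonneg (h i)), hpq'.sub_one_mul_conj]
        have hf₀norm : ‖f₀‖ ≤ BΛ * N ^ (1/q) := by
          calc ‖f₀‖ ≤ BΛ * (∑ i ∈ s, ‖g i‖ ^ q) ^ (1/q) := (hriesz s g).2
            _ ≤ BΛ * N ^ (1/q) := by
                refine mul_le_mul_of_nonneg_left (Real.rpow_le_rpow
                  (Finset.sum_nonneg fun i _ => Real.rpow_nonneg (norm_nonneg _) q)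
                  (Finset.sum_le_sum fun i _ => hgq i)
                  (one_div_nonneg.mpr hq0.le)) hBΛ.le
        have hΛdf₀ : ∀ k ∈ s, Λd k f₀ = g k := by
          intro k hk
          rw [hf₀, map_sum]
          rw [Finset.sum_eq_single_of_mem k hk
            (fun i _ hik => by rw [hbio k i (g i), dif_neg hik])]
          rw [hbio k k (g k), dif_pos rfl]
        have hΦf₀ : Φ f₀ = ∑ k ∈ s, (‖h k‖ ^ (p - 1)) * ((h k) (u k)) := by
          rw [hΦ, ContinuousLinearMap.sum_apply]
          refine Finset.sum_congr rfl fun k hk => ?_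
          show (h k) (Λd k f₀) = _
          rw [hΛdf₀ k hk, hgdef]
          simp only []
          rw [map_smul, smul_eq_mul]
        have hlow : N - δ * C ≤ Φ f₀ := by
          rw [hΦf₀]
          have hterm : ∀ k ∈ s, (‖h k‖ ^ (p - 1)) * (‖h k‖ - δ)
              ≤ (‖h k‖ ^ (p - 1)) * ((h k) (u k)) := fun k _ =>
            mul_le_mul_of_nonneg_left (hu2 k) (Real.rpow_nonneg (norm_nonneg (h k)) _)
          calc N - δ * C = ∑ k ∈ s, (‖h k‖ ^ (p - 1)) * (‖h k‖ - δ) := by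
                rw [hNdef, hCdef, Finset.mul_sum, ← Finset.sum_sub_distrib]
                refine Finset.sum_congr rfl fun k _ => ?_
                rw [hsplit ‖h k‖ (norm_nonneg (h k))]
                ring
            _ ≤ ∑ k ∈ s, (‖h k‖ ^ (p - 1)) * ((h k) (u k)) := Finset.sum_le_sum hterm
        have hkey : N ≤ (‖Φ‖ + ε) * (BΛ * N ^ (1/q)) := by
          have h1 : Φ f₀ ≤ ‖Φ‖ * ‖f₀‖ := by
            have := Φ.le_opNorm f₀
            rw [Real.norm_eq_abs] at this
            exact (le_abs_self _).trans this
          have h2 : ‖Φ‖ * ‖f₀‖ ≤ ‖Φ‖ * (BΛ * N ^ (1/q)) :=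
            mul_le_mul_of_nonneg_left hf₀norm (norm_nonneg Φ)
          have h3 : δ * C ≤ ε * (BΛ * N ^ (1/q)) := by
            have h31 : δ * (C + 1) = ε * BΛ * N ^ (1/q) := by
              rw [hδdef]
              exact div_mul_cancel₀ _ hC1.ne'
            have h32 : δ * C ≤ δ * (C + 1) :=
              mul_le_mul_of_nonneg_left (by linarith) hδ.le
            rw [h31] at h32
            calc δ * C ≤ ε * BΛ * N ^ (1/q) := h32
              _ = ε * (BΛ * N ^ (1/q)) := by ring
          have hexp : (‖Φ‖ + ε) * (BΛ * N ^ (1/q))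
              = ‖Φ‖ * (BΛ * N ^ (1/q)) + ε * (BΛ * N ^ (1/q)) := by ring
          linarith [hlow, h1, h2, h3]
        have hNsplit : N ^ (1/p) * N ^ (1/q) = N := by
          rw [← Real.rpow_add hNpos, hpq, Real.rpow_one]
        have h5 : N ^ (1/p) ≤ (‖Φ‖ + ε) * BΛ := by
          refine le_of_mul_le_mul_right ?_ hNq
          rw [hNsplit]
          calc N ≤ (‖Φ‖ + ε) * (BΛ * N ^ (1/q)) := hkey
            _ = (‖Φ‖ + ε) * BΛ * N ^ (1/q) := by ring
        rw [one_div_mul_eq_div, div_le_iff₀ hBΛ]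
        exact h5
    · -- upper bound
      have hNp0 : (0:ℝ) ≤ N ^ (1/p) := Real.rpow_nonneg hNnn _
      refine ContinuousLinearMap.opNorm_le_bound _
        (mul_nonneg (by positivity) hNp0) fun f => ?_
      have happ : Φ f = ∑ i ∈ s, (h i) ((Λd i) f) := by
        rw [hΦ, ContinuousLinearMap.sum_apply]
        rfl
      rw [happ]
      have hcoordle : (∑ i ∈ s, ‖Λd i f‖ ^ q) ^ (1/q) ≤ ‖S f‖ := by
        rw [hlpnorm (S f)]
        refine Real.rpow_le_rpow
          (Finset.sum_nonneg fun i _ => Real.rpow_nonneg (norm_nonneg _) q) ?_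
          (one_div_nonneg.mpr hq0.le)
        have heqn2 : ∀ i, ‖Λd i f‖ ^ q = ‖(S f : ∀ j, StrongDual ℝ (Y j)) i‖ ^ q := by
          intro i
          rw [hΛdapp]
        calc (∑ i ∈ s, ‖Λd i f‖ ^ q) = ∑ i ∈ s, ‖(S f : ∀ j, StrongDual ℝ (Y j)) i‖ ^ q :=
              Finset.sum_congr rfl fun i _ => heqn2 i
          _ ≤ ∑' i, ‖(S f : ∀ j, StrongDual ℝ (Y j)) i‖ ^ q :=
              Summable.sum_le_tsum s (fun i _ => Real.rpow_nonneg (norm_nonneg _) q) (hgsum (S f))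
      calc ‖∑ i ∈ s, (h i) ((Λd i) f)‖ ≤ ∑ i ∈ s, ‖(h i) ((Λd i) f)‖ := norm_sum_le _ _
        _ ≤ ∑ i ∈ s, ‖h i‖ * ‖(Λd i) f‖ :=
            Finset.sum_le_sum fun i _ => ContinuousLinearMap.le_opNorm _ _
        _ ≤ (∑ i ∈ s, ‖h i‖ ^ p) ^ (1/p) * (∑ i ∈ s, ‖(Λd i) f‖ ^ q) ^ (1/q) :=
            Real.inner_le_Lp_mul_Lq_of_nonneg s hpq' (fun i _ => norm_nonneg (h i))
              (fun i _ => norm_nonneg _)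
        _ ≤ N ^ (1/p) * ‖S f‖ := mul_le_mul_of_nonneg_left hcoordle hNp0
        _ ≤ N ^ (1/p) * (AΛ⁻¹ * ‖f‖) := mul_le_mul_of_nonneg_left (hSbound f) hNp0
        _ = 1 / AΛ * N ^ (1/p) * ‖f‖ := by
            rw [one_div]
            ring
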